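/- arXiv:1506.07124 — 2 statements merged into one kernel-verified Lean document; each statement's English description precedes it below -/
import Mathlib

section
/- Let P be an n×ℓ and Q an n×m joint probability matrix. If Q ≺_c P, then for every convex symmetric function Φ : ℝⁿ → ℝ, Σ_{y=1}^ℓ p_y Φ(p^{|y}) ≥ Σ_{w=1}^m q_w Φ(q^{|w}), where p_y = Σ_x p_{xy} is the marginal, p^{|y} is the conditional distribution (x ↦ p_{xy}/p_y), and similarly for Q. -/
open Matrix Finset

/-- Row-stochastic matrix: nonnegative entries, each row sums to 1. -/
def RowStoch {ℓ m : ℕ} (T : Matrix (Fin ℓ) (Fin m) ℝ) : Prop :=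
  (∀ y w, 0 ≤ T y w) ∧ ∀ y, ∑ w, T y w = 1

/-- Doubly stochastic matrix. -/
def DStoch {n : ℕ} (D : Matrix (Fin n) (Fin n) ℝ) : Prop :=
  (∀ i j, 0 ≤ D i j) ∧ (∀ i, ∑ j, D i j = 1) ∧ (∀ j, ∑ i, D i j = 1)

/-- Conditional majorization `P ≻_c Q` via classical-conditioned random relabelings:
`Q = ∑ j, D j * P * R j` with each `D j` doubly stochastic, each `R j` entrywise
nonnegative, and `∑ j, R j` row-stochastic. -/
def CondMaj {n ℓ m : ℕ} (P : Matrix (Fin n) (Fin ℓ) ℝ)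
    (Q : Matrix (Fin n) (Fin m) ℝ) : Prop :=
  ∃ (J : ℕ) (D : Fin J → Matrix (Fin n) (Fin n) ℝ)
    (R : Fin J → Matrix (Fin ℓ) (Fin m) ℝ),
    (∀ j, DStoch (D j)) ∧ (∀ j y w, 0 ≤ R j y w) ∧
    RowStoch (∑ j, R j) ∧ Q = ∑ j, D j * P * R j

/-- Joint probability matrix: nonnegative entries summing to one. -/
def JointProb {n ℓ : ℕ} (P : Matrix (Fin n) (Fin ℓ) ℝ) : Prop :=
  (∀ x y, 0 ≤ P x y) ∧ ∑ x, ∑ y, P x y = 1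

/-- Column sum (marginal). -/
noncomputable def ColSum {n m : ℕ} (Q : Matrix (Fin n) (Fin m) ℝ) (w : Fin m) : ℝ :=
  ∑ x, Q x w

lemma permMatrix_mulVec' {n : ℕ} (σ : Equiv.Perm (Fin n)) (v : Fin n → ℝ) :
    (σ.permMatrix ℝ).mulVec v = v ∘ σ := by
  funext i
  simp [Equiv.Perm.permMatrix, Matrix.mulVec, dotProduct, PEquiv.toMatrix_apply,
    Equiv.toPEquiv_apply]

lemma phi_mulVec_le {n : ℕ} (Φ : (Fin n → ℝ) → ℝ) (hconv : ConvexOn ℝ Set.univ Φ)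
    (hsym : ∀ (σ : Equiv.Perm (Fin n)) (v : Fin n → ℝ), Φ (v ∘ σ) = Φ v)
    (D : Matrix (Fin n) (Fin n) ℝ) (hD : DStoch D) (v : Fin n → ℝ) :
    Φ (D.mulVec v) ≤ Φ v := by
  have hmem : D ∈ doublyStochastic ℝ (Fin n) :=
    mem_doublyStochastic_iff_sum.mpr ⟨hD.1, hD.2.1, hD.2.2⟩
  obtain ⟨w, hw0, hw1, hwD⟩ := exists_eq_sum_perm_of_mem_doublyStochastic hmem
  have hDv : D.mulVec v = ∑ σ : Equiv.Perm (Fin n), w σ • ((σ.permMatrix ℝ).mulVec v) := by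
    rw [← hwD]
    funext i
    simp only [Matrix.mulVec, dotProduct, Finset.sum_apply, Matrix.sum_apply,
      Matrix.smul_apply, Pi.smul_apply, smul_eq_mul, Finset.sum_mul]
    rw [Finset.sum_comm]
    exact Finset.sum_congr rfl fun σ _ => by
      rw [Finset.mul_sum]; exact Finset.sum_congr rfl fun x _ => by ring
  rw [hDv]
  calc Φ (∑ σ : Equiv.Perm (Fin n), w σ • ((σ.permMatrix ℝ).mulVec v))
      ≤ ∑ σ : Equiv.Perm (Fin n), w σ * Φ ((σ.permMatrix ℝ).mulVec v) :=
        hconv.map_sum_le (fun i _ => hw0 i) hw1 (fun i _ => Set.mem_univ _)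
    _ = ∑ σ : Equiv.Perm (Fin n), w σ * Φ v := by
        refine Finset.sum_congr rfl fun σ _ => ?_
        rw [permMatrix_mulVec', hsym]
    _ = Φ v := by rw [← Finset.sum_mul, hw1, one_mul]

theorem stmt6 {n ℓ m : ℕ} (P : Matrix (Fin n) (Fin ℓ) ℝ) (Q : Matrix (Fin n) (Fin m) ℝ)
    (hP : JointProb P) (hQ : JointProb Q) (h : CondMaj P Q)
    (Φ : (Fin n → ℝ) → ℝ) (hconv : ConvexOn ℝ Set.univ Φ)
    (hsym : ∀ (σ : Equiv.Perm (Fin n)) (v : Fin n → ℝ), Φ (v ∘ σ) = Φ v) :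
    ∑ w, ColSum Q w * Φ (fun x => Q x w / ColSum Q w) ≤
      ∑ y, ColSum P y * Φ (fun x => P x y / ColSum P y) := by
  obtain ⟨J, D, R, hDS, hR0, hRsum, hQeq⟩ := h
  have hp0 : ∀ y, 0 ≤ ColSum P y := fun y => Finset.sum_nonneg fun x _ => hP.1 x y
  have hq0 : ∀ w, 0 ≤ ColSum Q w := fun w => Finset.sum_nonneg fun x _ => hQ.1 x w
  have hpz : ∀ y, ColSum P y = 0 → ∀ x, P x y = 0 := fun y hy x =>
    (Finset.sum_eq_zero_iff_of_nonneg (fun i _ => hP.1 i y)).mp hy x (Finset.mem_univ x)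
  have hQcol : ∀ x w, Q x w = ∑ j, ∑ y, (∑ i, D j x i * P i y) * R j y w := by
    intro x w
    rw [hQeq]
    simp only [Matrix.sum_apply, Matrix.mul_apply]
  have hq_dec : ∀ w, ColSum Q w = ∑ j, ∑ y, R j y w * ColSum P y := by
    intro w
    calc ColSum Q w = ∑ x, ∑ j, ∑ y, (∑ i, D j x i * P i y) * R j y w :=
          Finset.sum_congr rfl fun x _ => hQcol x w
      _ = ∑ j, ∑ y, (∑ x, ∑ i, D j x i * P i y) * R j y w := by
          rw [Finset.sum_comm]
          refine Finset.sum_congr rfl fun j _ => ?_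
          rw [Finset.sum_comm]
          exact Finset.sum_congr rfl fun y _ => (Finset.sum_mul _ _ _).symm
      _ = ∑ j, ∑ y, R j y w * ColSum P y := by
          refine Finset.sum_congr rfl fun j _ => Finset.sum_congr rfl fun y _ => ?_
          have : ∑ x, ∑ i, D j x i * P i y = ColSum P y := by
            rw [Finset.sum_comm]
            calc ∑ i, ∑ x, D j x i * P i y = ∑ i, (∑ x, D j x i) * P i y :=
                  Finset.sum_congr rfl fun i _ => (Finset.sum_mul _ _ _).symm
              _ = ColSum P y := by
                  simp only [(hDS j).2.2, one_mul]; rfl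
          rw [this, mul_comm]
  have key : ∀ w, ColSum Q w * Φ (fun x => Q x w / ColSum Q w) ≤
      ∑ j, ∑ y, R j y w * ColSum P y * Φ (fun x => P x y / ColSum P y) := by
    intro w
    rcases eq_or_lt_of_le (hq0 w) with hqw | hqw
    · -- zero column
      have hsum0 : ∑ j, ∑ y, R j y w * ColSum P y = 0 := by rw [← hq_dec w, ← hqw]
      have hz : ∀ j y, R j y w * ColSum P y = 0 := by
        intro j y
        have hinner : ∀ j ∈ Finset.univ, (0:ℝ) ≤ ∑ y, R j y w * ColSum P y :=
          fun j _ => Finset.sum_nonneg fun y _ => mul_nonneg (hR0 j y w) (hp0 y)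
        have h1 := (Finset.sum_eq_zero_iff_of_nonneg hinner).mp hsum0 j (Finset.mem_univ j)
        exact (Finset.sum_eq_zero_iff_of_nonneg
          (fun y _ => mul_nonneg (hR0 j y w) (hp0 y))).mp h1 y (Finset.mem_univ y)
      rw [← hqw, zero_mul]
      refine le_of_eq ?_
      refine (Finset.sum_eq_zero fun j _ => Finset.sum_eq_zero fun y _ => ?_).symm
      rw [hz j y, zero_mul]
    · -- positive column
      set qw := ColSum Q w with hqwdef
      have hqne : qw ≠ 0 := ne_of_gt hqw
      set μ : Fin J × Fin ℓ → ℝ := fun z => R z.1 z.2 w * ColSum P z.2 / qw with hμdef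
      set g : Fin J × Fin ℓ → (Fin n → ℝ) :=
        fun z => (D z.1).mulVec (fun x => P x z.2 / ColSum P z.2) with hgdef
      have hμ0 : ∀ z : Fin J × Fin ℓ, 0 ≤ μ z := fun z =>
        div_nonneg (mul_nonneg (hR0 z.1 z.2 w) (hp0 z.2)) hqw.le
      have hμ1 : ∑ z : Fin J × Fin ℓ, μ z = 1 := by
        rw [hμdef]
        simp only
        rw [← Finset.sum_div, Fintype.sum_prod_type, ← hq_dec w, div_self hqne]
      have hvec : (fun x => Q x w / qw) = ∑ z : Fin J × Fin ℓ, μ z • g z := by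
        funext x
        rw [Finset.sum_apply]
        rw [Fintype.sum_prod_type]
        simp only [Pi.smul_apply, smul_eq_mul, hμdef, hgdef]
        rw [hQcol x w, Finset.sum_div]
        refine Finset.sum_congr rfl fun j _ => ?_
        rw [Finset.sum_div]
        refine Finset.sum_congr rfl fun y _ => ?_
        rcases eq_or_ne (ColSum P y) 0 with hpy | hpy
        · simp [hpy, hpz y hpy, Matrix.mulVec, dotProduct]
        · simp only [Matrix.mulVec, dotProduct]
          have : ∑ i, D j x i * (P i y / ColSum P y) = (∑ i, D j x i * P i y) / ColSum P y := by
            rw [Finset.sum_div]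
            exact Finset.sum_congr rfl fun i _ => (mul_div_assoc _ _ _).symm
          rw [this]
          field_simp
      have hJen : Φ (fun x => Q x w / qw) ≤ ∑ z : Fin J × Fin ℓ, μ z * Φ (g z) := by
        rw [hvec]
        exact hconv.map_sum_le (fun z _ => hμ0 z) hμ1 (fun z _ => Set.mem_univ _)
      have hstep : ∀ z : Fin J × Fin ℓ, Φ (g z) ≤ Φ (fun x => P x z.2 / ColSum P z.2) :=
        fun z => phi_mulVec_le Φ hconv hsym (D z.1) (hDS z.1) _
      have hJen2 : Φ (fun x => Q x w / qw) ≤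
          ∑ z : Fin J × Fin ℓ, μ z * Φ (fun x => P x z.2 / ColSum P z.2) :=
        hJen.trans (Finset.sum_le_sum fun z _ =>
          mul_le_mul_of_nonneg_left (hstep z) (hμ0 z))
      calc qw * Φ (fun x => Q x w / qw)
          ≤ qw * ∑ z : Fin J × Fin ℓ, μ z * Φ (fun x => P x z.2 / ColSum P z.2) :=
            mul_le_mul_of_nonneg_left hJen2 hqw.le
        _ = ∑ j, ∑ y, R j y w * ColSum P y * Φ (fun x => P x y / ColSum P y) := by
            rw [Finset.mul_sum, Fintype.sum_prod_type]
            refine Finset.sum_congr rfl fun j _ => Finset.sum_congr rfl fun y _ => ?_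
            rw [hμdef]
            field_simp
  calc ∑ w, ColSum Q w * Φ (fun x => Q x w / ColSum Q w)
      ≤ ∑ w, ∑ j, ∑ y, R j y w * ColSum P y * Φ (fun x => P x y / ColSum P y) :=
        Finset.sum_le_sum fun w _ => key w
    _ = ∑ y, ColSum P y * Φ (fun x => P x y / ColSum P y) := by
        have hRy : ∀ y, ∑ j, ∑ w, R j y w = 1 := by
          intro y
          have h2 := hRsum.2 y
          have h3 : ∀ w, (∑ j, R j) y w = ∑ j, R j y w := by
            intro w; simp [Matrix.sum_apply]
          rw [Finset.sum_congr rfl fun w _ => h3 w] at h2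
          rw [Finset.sum_comm]
          exact h2
        rw [Finset.sum_comm]
        rw [Finset.sum_congr rfl fun j (_ : j ∈ Finset.univ) =>
          Finset.sum_comm (γ := Fin m) (s := Finset.univ) (t := Finset.univ)
            (f := fun w y => R j y w * ColSum P y * Φ (fun x => P x y / ColSum P y))]
        rw [Finset.sum_comm]
        refine Finset.sum_congr rfl fun y _ => ?_
        calc ∑ j, ∑ w, R j y w * ColSum P y * Φ (fun x => P x y / ColSum P y)
            = (∑ j, ∑ w, R j y w) * (ColSum P y * Φ (fun x => P x y / ColSum P y)) := by
              rw [Finset.sum_mul]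
              refine Finset.sum_congr rfl fun j _ => ?_
              rw [Finset.sum_mul]
              exact Finset.sum_congr rfl fun w _ => by ring
          _ = ColSum P y * Φ (fun x => P x y / ColSum P y) := by rw [hRy y, one_mul]
end

section
/- For n×n vectors: let u, v ∈ ℝⁿ with nonnegative entries. Then u is weakly majorized by v (Σ_{i=1}^k u↓_i ≤ Σ_{i=1}^k v↓_i for all k) if and only if there exists a doubly stochastic matrix D with u ≤ Dv entrywise. -/
open Matrix Finset
open Pointwise

/-- Nonincreasing rearrangement of a vector. -/
noncomputable def sortDesc {n : ℕ} (u : Fin n → ℝ) : Fin n → ℝ :=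
  fun i => u (Tuple.sort (fun j => -u j) i)

/-- Sum of the `k` largest entries of `u`. -/
noncomputable def pSumDesc {n : ℕ} (u : Fin n → ℝ) (k : ℕ) : ℝ :=
  ∑ i ∈ Finset.univ.filter (fun i : Fin n => (i : ℕ) < k), sortDesc u i

/-- `Majorizes u v` means `u ≻ v`: all partial sums of the sorted `u` dominate
those of `v`, and the total sums coincide. -/
def Majorizes {n : ℕ} (u v : Fin n → ℝ) : Prop :=
  (∀ k : ℕ, pSumDesc v k ≤ pSumDesc u k) ∧ ∑ i, u i = ∑ i, v i

noncomputable def sperm {n : ℕ} (u : Fin n → ℝ) : Equiv.Perm (Fin n) :=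
  Tuple.sort (fun j => -u j)

lemma sortDesc_eq {n : ℕ} (u : Fin n → ℝ) (i : Fin n) : sortDesc u i = u (sperm u i) := rfl

lemma antitone_sortDesc {n : ℕ} (u : Fin n → ℝ) : Antitone (sortDesc u) := by
  have h := Tuple.monotone_sort (fun j => -u j)
  intro i j hij
  have := h hij
  simp only [Function.comp_apply] at this
  simp only [sortDesc]
  linarith

noncomputable def uext {n : ℕ} (u : Fin n → ℝ) : ℕ → ℝ :=
  fun i => if h : i < n then sortDesc u ⟨i, h⟩ else 0

lemma pSumDesc_eq_range {n : ℕ} (u : Fin n → ℝ) (k : ℕ) :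
    pSumDesc u k = ∑ i ∈ Finset.range k, uext u i := by
  have h1 : pSumDesc u k = ∑ i ∈ Finset.range n, (if i < k then uext u i else 0) := by
    rw [pSumDesc, Finset.sum_filter, ← Fin.sum_univ_eq_sum_range
      (fun i => if i < k then uext u i else 0) n]
    refine Finset.sum_congr rfl fun i _ => ?_
    by_cases h : (i : ℕ) < k <;> simp [h, uext, i.isLt]
  have h2 : ∑ i ∈ Finset.range k, uext u i
      = ∑ i ∈ Finset.range k, (if i < n then uext u i else 0) := by
    refine Finset.sum_congr rfl fun i _ => ?_
    by_cases h : i < n <;> simp [h, uext]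
  rw [h1, h2, ← Finset.sum_filter, ← Finset.sum_filter]
  refine Finset.sum_congr ?_ fun _ _ => rfl
  ext i
  simp [and_comm]

lemma abel_nonpos (N : ℕ) (a d : ℕ → ℝ)
    (hmono : ∀ i j, i ≤ j → j < N → a j ≤ a i) (hpos : ∀ i, i < N → 0 ≤ a i)
    (hsum : ∀ k, k ≤ N → ∑ i ∈ Finset.range k, d i ≤ 0) :
    ∑ i ∈ Finset.range N, a i * d i ≤ 0 := by
  induction N generalizing a with
  | zero => simp
  | succ N ih =>
    have key : ∑ i ∈ Finset.range (N+1), a i * d i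
        = ∑ i ∈ Finset.range (N+1), (a i - a N) * d i
          + a N * ∑ i ∈ Finset.range (N+1), d i := by
      rw [Finset.mul_sum, ← Finset.sum_add_distrib]
      exact Finset.sum_congr rfl fun i _ => by ring
    rw [key, Finset.sum_range_succ]
    have h1 : ∑ i ∈ Finset.range N, (a i - a N) * d i ≤ 0 := by
      refine ih (fun i => a i - a N) (fun i j hij hj => ?_) (fun i hi => ?_) ?_
      · show a j - a N ≤ a i - a N
        have := hmono i j hij (hj.trans (Nat.lt_succ_self N)); linarith
      · show 0 ≤ a i - a N
        have := hmono i N hi.le (Nat.lt_succ_self N); linarith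
      · exact fun k hk => hsum k (hk.trans (Nat.le_succ N))
    have h2 : a N * ∑ i ∈ Finset.range (N+1), d i ≤ 0 :=
      mul_nonpos_of_nonneg_of_nonpos (hpos N (Nat.lt_succ_self N)) (hsum (N+1) le_rfl)
    have h3 : (a N - a N) * d N = 0 := by ring
    linarith

lemma sorted_dot_le {n : ℕ} (a u v : Fin n → ℝ) (ha0 : ∀ i, 0 ≤ a i)
    (h : ∀ k, pSumDesc u k ≤ pSumDesc v k) :
    ∑ i, sortDesc a i * sortDesc u i ≤ ∑ i, sortDesc a i * sortDesc v i := by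
  have key : ∑ i ∈ Finset.range n, uext a i * (uext u i - uext v i) ≤ 0 := by
    refine abel_nonpos n (uext a) _ (fun i j hij hj => ?_) (fun i hi => ?_) (fun k hk => ?_)
    · simp only [uext, dif_pos hj, dif_pos (lt_of_le_of_lt hij hj)]
      exact antitone_sortDesc a (by exact hij)
    · simp only [uext, dif_pos hi]
      exact ha0 _
    · have : ∑ i ∈ Finset.range k, (uext u i - uext v i)
          = pSumDesc u k - pSumDesc v k := by
        rw [Finset.sum_sub_distrib, pSumDesc_eq_range, pSumDesc_eq_range]
      rw [this]
      linarith [h k]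
  have conv : ∀ w : Fin n → ℝ, ∑ i ∈ Finset.range n, uext a i * uext w i
      = ∑ i, sortDesc a i * sortDesc w i := by
    intro w
    rw [← Fin.sum_univ_eq_sum_range (fun i => uext a i * uext w i) n]
    refine Finset.sum_congr rfl fun i _ => ?_
    simp [uext, i.isLt]
  have expand : ∑ i ∈ Finset.range n, uext a i * (uext u i - uext v i)
      = ∑ i ∈ Finset.range n, uext a i * uext u i
        - ∑ i ∈ Finset.range n, uext a i * uext v i := by
    rw [← Finset.sum_sub_distrib]; exact Finset.sum_congr rfl fun i _ => by ring
  rw [expand, conv, conv] at key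
  linarith

lemma dot_le_sorted {n : ℕ} (a w : Fin n → ℝ) :
    ∑ i, a i * w i ≤ ∑ i, sortDesc a i * sortDesc w i := by
  have h1 : ∑ i, a i * w i = ∑ i, sortDesc a i * sortDesc w ((sperm a).trans (sperm w)⁻¹ i) := by
    rw [← Equiv.sum_comp (sperm a) (fun i => a i * w i)]
    refine Finset.sum_congr rfl fun i _ => ?_
    simp [sortDesc_eq, sperm]
  rw [h1]
  have hmono : Monovary (sortDesc a) (sortDesc w) :=
    (antitone_sortDesc a).monovary (antitone_sortDesc w)
  have := hmono.sum_smul_comp_perm_le_sum_smul (σ := (sperm a).trans (sperm w)⁻¹)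
  simpa [smul_eq_mul] using this

lemma sorted_dot_perm {n : ℕ} (a w : Fin n → ℝ) :
    ∑ i, sortDesc a i * sortDesc w i
      = ∑ j, a j * w (((sperm a)⁻¹.trans (sperm w)) j) := by
  rw [← Equiv.sum_comp (sperm a) (fun j => a j * w (((sperm a)⁻¹.trans (sperm w)) j))]
  refine Finset.sum_congr rfl fun i _ => ?_
  simp [sortDesc_eq, sperm, Equiv.Perm.inv_def, Equiv.symm_apply_apply]

lemma card_filter_lt {n m : ℕ} (hm : m ≤ n) :
    (Finset.univ.filter (fun i : Fin n => (i : ℕ) < m)).card = m := by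
  rw [← Finset.card_range m]
  apply Finset.card_bij (fun (i : Fin n) _ => (i : ℕ))
  · intro i hi; simp only [Finset.mem_filter] at hi; simpa using hi.2
  · intro i hi j hj hij; exact Fin.ext hij
  · intro j hj
    simp only [Finset.mem_range] at hj
    exact ⟨⟨j, lt_of_lt_of_le hj hm⟩, by simp [hj], rfl⟩

lemma frac_dot_le_pSum {n : ℕ} (v c : Fin n → ℝ) (hv : ∀ i, 0 ≤ v i)
    (hc0 : ∀ j, 0 ≤ c j) (hc1 : ∀ j, c j ≤ 1) (k : ℕ) (hck : ∑ j, c j ≤ k) :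
    ∑ j, c j * v j ≤ pSumDesc v k := by
  set m := min k n with hm
  have hmn : m ≤ n := min_le_right _ _
  have hmk : (m : ℝ) ≤ k := by exact_mod_cast (min_le_left k n : m ≤ k)
  -- pSumDesc v k = pSumDesc v m
  have hps : pSumDesc v k = pSumDesc v m := by
    unfold pSumDesc
    refine Finset.sum_congr ?_ fun _ _ => rfl
    ext i
    simp only [Finset.mem_filter, Finset.mem_univ, true_and, hm, lt_min_iff]
    exact ⟨fun h => ⟨h, i.isLt⟩, fun h => h.1⟩
  rw [hps]
  -- reindex by sperm v
  have hre : ∑ j, c j * v j = ∑ i, c (sperm v i) * sortDesc v i := by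
    rw [← Equiv.sum_comp (sperm v) (fun j => c j * v j)]
    exact Finset.sum_congr rfl fun i _ => by simp [sortDesc_eq]
  rw [hre]
  set c' : Fin n → ℝ := fun i => c (sperm v i) with hc'
  have hc'0 : ∀ i, 0 ≤ c' i := fun i => hc0 _
  have hc'1 : ∀ i, c' i ≤ 1 := fun i => hc1 _
  have hc'sum : ∑ i, c' i ≤ (m : ℝ) := by
    have : ∑ i, c' i = ∑ j, c j := Equiv.sum_comp (sperm v) c
    rw [this]
    have hn : ∑ j, c j ≤ (n : ℝ) := by
      calc ∑ j, c j ≤ ∑ _j : Fin n, (1:ℝ) := Finset.sum_le_sum fun j _ => hc1 j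
        _ = n := by simp
    have : (m : ℝ) = min (k : ℝ) (n : ℝ) := by rw [hm]; push_cast; rfl
    rw [this]
    exact le_min hck hn
  -- the threshold value t
  set t : ℝ := uext v m with ht
  have ht0 : 0 ≤ t := by
    rw [ht]; unfold uext
    split
    · rw [sortDesc_eq]; exact hv _
    · rfl
  have hge : ∀ i : Fin n, (i : ℕ) < m → t ≤ sortDesc v i := by
    intro i hi
    rw [ht]; unfold uext
    rcases lt_or_ge m n with hmn' | hmn'
    · rw [dif_pos hmn']
      exact antitone_sortDesc v (by exact hi.le)
    · rw [dif_neg (not_lt.mpr hmn')]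
      rw [sortDesc_eq]; exact hv _
  have hle2 : ∀ i : Fin n, m ≤ (i : ℕ) → sortDesc v i ≤ t := by
    intro i hi
    have hmn' : m < n := lt_of_le_of_lt hi i.isLt
    rw [ht]; unfold uext; rw [dif_pos hmn']
    exact antitone_sortDesc v (by exact hi)
  -- pSumDesc v m as a full sum with indicator
  have hpsm : pSumDesc v m = ∑ i : Fin n, (if (i : ℕ) < m then sortDesc v i else 0) := by
    unfold pSumDesc; rw [Finset.sum_filter]
  rw [hpsm]
  have key : ∀ i : Fin n, c' i * sortDesc v i - (if (i : ℕ) < m then sortDesc v i else 0)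
      ≤ (c' i - (if (i : ℕ) < m then 1 else 0)) * t := by
    intro i
    by_cases hi : (i : ℕ) < m
    · simp only [if_pos hi]
      have h1 : c' i - 1 ≤ 0 := by linarith [hc'1 i]
      nlinarith [hge i hi]
    · simp only [if_neg hi]
      push_neg at hi
      nlinarith [hle2 i hi, hc'0 i]
  have hsumkey : ∑ i, c' i * sortDesc v i - ∑ i : Fin n, (if (i : ℕ) < m then sortDesc v i else 0)
      ≤ (∑ i, c' i - (m : ℝ)) * t := by
    have hcount : ∑ i : Fin n, (if (i : ℕ) < m then (1:ℝ) else 0) = (m : ℝ) := by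
      rw [← Finset.sum_filter]
      simp [card_filter_lt hmn]
    calc ∑ i, c' i * sortDesc v i - ∑ i : Fin n, (if (i : ℕ) < m then sortDesc v i else 0)
        = ∑ i : Fin n, (c' i * sortDesc v i - (if (i : ℕ) < m then sortDesc v i else 0)) := by
          rw [Finset.sum_sub_distrib]
      _ ≤ ∑ i : Fin n, (c' i - (if (i : ℕ) < m then 1 else 0)) * t :=
          Finset.sum_le_sum fun i _ => key i
      _ = (∑ i, c' i - (m : ℝ)) * t := by
          rw [← hcount, ← Finset.sum_mul, Finset.sum_sub_distrib]
  nlinarith [hsumkey, hc'sum, ht0]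

lemma backward_dir {n : ℕ} (u v : Fin n → ℝ) (D : Matrix (Fin n) (Fin n) ℝ)
    (hD : DStoch D) (hle : ∀ i, u i ≤ ∑ j, D i j * v j) (hv : ∀ i, 0 ≤ v i)
    (k : ℕ) : pSumDesc u k ≤ pSumDesc v k := by
  obtain ⟨hD0, hDr, hDc⟩ := hD
  set F := Finset.univ.filter (fun i : Fin n => (i : ℕ) < k) with hF
  set c : Fin n → ℝ := fun j => ∑ i ∈ F, D (sperm u i) j with hc
  have step1 : pSumDesc u k ≤ ∑ j, c j * v j := by
    calc pSumDesc u k = ∑ i ∈ F, u (sperm u i) := by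
          exact Finset.sum_congr rfl fun i _ => rfl
      _ ≤ ∑ i ∈ F, ∑ j, D (sperm u i) j * v j :=
          Finset.sum_le_sum fun i _ => hle _
      _ = ∑ j, ∑ i ∈ F, D (sperm u i) j * v j := Finset.sum_comm
      _ = ∑ j, c j * v j := by
          refine Finset.sum_congr rfl fun j _ => ?_
          rw [hc, Finset.sum_mul]
  refine step1.trans (frac_dot_le_pSum v c hv (fun j => ?_) (fun j => ?_) k ?_)
  · exact Finset.sum_nonneg fun i _ => hD0 _ _
  · calc c j ≤ ∑ i : Fin n, D (sperm u i) j :=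
        Finset.sum_le_sum_of_subset_of_nonneg (Finset.subset_univ F)
          (fun i _ _ => hD0 _ _)
      _ = ∑ i, D i j := Equiv.sum_comp (sperm u) (fun i => D i j)
      _ = 1 := hDc j
  · have hsum : ∑ j, c j = (F.card : ℝ) := by
      rw [hc, Finset.sum_comm]
      calc ∑ i ∈ F, ∑ j, D (sperm u i) j = ∑ i ∈ F, (1:ℝ) :=
            Finset.sum_congr rfl fun i _ => hDr _
        _ = (F.card : ℝ) := by simp
    rw [hsum]
    have hcard : F.card ≤ k := by
      calc F.card = (F.image (fun i : Fin n => (i : ℕ))).card :=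
            (Finset.card_image_of_injective F Fin.val_injective).symm
        _ ≤ (Finset.range k).card := by
            apply Finset.card_le_card
            intro j hj
            simp only [Finset.mem_image, hF, Finset.mem_filter] at hj
            obtain ⟨i, ⟨_, hik⟩, rfl⟩ := hj
            exact Finset.mem_range.mpr hik
        _ = k := Finset.card_range k
    exact_mod_cast hcard

lemma forward_dir {n : ℕ} (u v : Fin n → ℝ) (hv : ∀ i, 0 ≤ v i)
    (h : ∀ k : ℕ, pSumDesc u k ≤ pSumDesc v k) :
    ∃ D : Matrix (Fin n) (Fin n) ℝ, DStoch D ∧ ∀ i, u i ≤ ∑ j, D i j * v j := by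
  classical
  set S : Set (Fin n → ℝ) := (fun M : Matrix (Fin n) (Fin n) ℝ => M.mulVec v) ''
    (doublyStochastic ℝ (Fin n) : Set _) with hSdef
  set Kneg : Set (Fin n → ℝ) := {x | ∀ i, x i ≤ 0} with hKdef
  have hKclosed : IsClosed Kneg := by
    have hK2 : Kneg = ⋂ i, {x : Fin n → ℝ | x i ≤ 0} := by ext x; simp [hKdef]
    rw [hK2]
    exact isClosed_iInter fun i => isClosed_le (continuous_apply i) continuous_const
  have hKconvex : Convex ℝ Kneg := by
    intro x hx y hy a b ha hb hab i
    have h1 := hx i; have h2 := hy i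
    have : a * x i + b * y i ≤ 0 := by nlinarith
    simpa using this
  let L : Matrix (Fin n) (Fin n) ℝ →ₗ[ℝ] (Fin n → ℝ) :=
    { toFun := fun M => M.mulVec v
      map_add' := fun M N => Matrix.add_mulVec M N v
      map_smul' := fun c M => by
        ext i; simp [Matrix.smul_mulVec] }
  have hScompact : IsCompact S := by
    have h1 : IsCompact (doublyStochastic ℝ (Fin n) : Set (Matrix (Fin n) (Fin n) ℝ)) := by
      rw [doublyStochastic_eq_convexHull_permMatrix]
      apply Set.Finite.isCompact_convexHull
      have h2 : {M : Matrix (Fin n) (Fin n) ℝ | ∃ σ : Equiv.Perm (Fin n), σ.permMatrix ℝ = M}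
          = Set.range (fun σ : Equiv.Perm (Fin n) => σ.permMatrix ℝ) := rfl
      rw [h2]; exact Set.finite_range _
    exact h1.image L.continuous_of_finiteDimensional
  have hSconvex : Convex ℝ S := by
    have := convex_doublyStochastic (R := ℝ) (n := Fin n) |>.linear_image L
    exact this
  have hCclosed : IsClosed (S + Kneg) := hKclosed.add_left_of_isCompact hScompact
  have hCconvex : Convex ℝ (S + Kneg) := hSconvex.add hKconvex
  have hperm : ∀ σ : Equiv.Perm (Fin n), (fun i => v (σ i)) ∈ S := by
    intro σ
    refine ⟨σ.permMatrix ℝ, permMatrix_mem_doublyStochastic, ?_⟩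
    ext i
    simp [Matrix.mulVec, dotProduct, Equiv.Perm.permMatrix, PEquiv.toMatrix_apply,
      Equiv.toPEquiv_apply, Finset.sum_ite_eq]
  have h0K : (0 : Fin n → ℝ) ∈ Kneg := fun i => le_refl 0
  have hSC : S ⊆ S + Kneg := fun w hw => by simpa using Set.add_mem_add hw h0K
  have hmem : u ∈ S + Kneg := by
    by_contra hu'
    obtain ⟨f, s, hfC, hsu⟩ := geometric_hahn_banach_closed_point hCconvex hCclosed hu'
    set a : Fin n → ℝ := fun j => f (Pi.single j 1) with ha
    have hfx : ∀ x : Fin n → ℝ, f x = ∑ j, x j * a j := by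
      intro x
      conv_lhs => rw [pi_eq_sum_univ x]
      rw [map_sum]
      refine Finset.sum_congr rfl fun j _ => ?_
      have hsingle : (fun j1 => if j = j1 then (1:ℝ) else 0) = Pi.single j 1 := by
        ext j1; simp [Pi.single_apply, eq_comm]
      rw [hsingle, _root_.map_smul, smul_eq_mul, ha]
    have hvS : v ∈ S := by
      refine ⟨1, ?_, by simp [Matrix.one_mulVec]⟩
      exact SetLike.mem_coe.mpr (one_mem _)
    have hfv : f v < s := hfC v (hSC hvS)
    have ha0 : ∀ j, 0 ≤ a j := by
      intro j; by_contra haj; push_neg at haj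
      set cc : ℝ := (s - f v) / a j with hcc
      have hccneg : cc < 0 := div_neg_of_pos_of_neg (by linarith) haj
      set y : Fin n → ℝ := cc • (Pi.single j 1 : Fin n → ℝ) with hy
      have hsingle : y ∈ Kneg := by
        intro i
        rw [hy]
        by_cases hij : i = j
        · subst hij; simp [hccneg.le]
        · simp [Pi.single_apply, hij]
      have hxC := hfC _ (Set.add_mem_add hvS hsingle)
      rw [map_add, hy, _root_.map_smul] at hxC
      have hcca : cc * a j = s - f v := div_mul_cancel₀ _ (ne_of_lt haj)
      have : f v + cc * a j < s := by simpa [smul_eq_mul, ha] using hxC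
      rw [hcca] at this
      linarith
    set τ : Equiv.Perm (Fin n) := (sperm a)⁻¹.trans (sperm v) with hτ
    have hchain : f u ≤ f (fun i => v (τ i)) := by
      rw [hfx, hfx]
      calc ∑ j, u j * a j = ∑ j, a j * u j :=
            Finset.sum_congr rfl fun j _ => mul_comm _ _
        _ ≤ ∑ i, sortDesc a i * sortDesc u i := dot_le_sorted a u
        _ ≤ ∑ i, sortDesc a i * sortDesc v i := sorted_dot_le a u v ha0 h
        _ = ∑ j, a j * v (τ j) := sorted_dot_perm a v
        _ = ∑ j, (fun i => v (τ i)) j * a j :=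
            Finset.sum_congr rfl fun j _ => mul_comm _ _
    have hlt := hfC _ (hSC (hperm τ))
    linarith
  obtain ⟨w, hwS, x, hx, hsum⟩ := Set.mem_add.mp hmem
  obtain ⟨M, hM, rfl⟩ := hwS
  have hM' := SetLike.mem_coe.mp hM
  rw [mem_doublyStochastic_iff_sum] at hM'
  obtain ⟨h1, h2, h3⟩ := hM'
  refine ⟨M, ⟨fun i j => h1 i j, h2, h3⟩, fun i => ?_⟩
  have heq : M.mulVec v i + x i = u i := congrFun hsum i
  have hxi : x i ≤ 0 := hx i
  have hmv : M.mulVec v i = ∑ j, M i j * v j := rfl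
  linarith [heq, hxi, hmv ▸ (le_refl (M.mulVec v i))]

theorem stmt8 {n : ℕ} (u v : Fin n → ℝ) (hu : ∀ i, 0 ≤ u i) (hv : ∀ i, 0 ≤ v i) :
    (∀ k : ℕ, pSumDesc u k ≤ pSumDesc v k) ↔
      ∃ D : Matrix (Fin n) (Fin n) ℝ, DStoch D ∧ ∀ i, u i ≤ ∑ j, D i j * v j := by
  constructor
  · intro h
    exact forward_dir u v hv h
  · rintro ⟨D, hD, hle⟩ k
    exact backward_dir u v D hD hle hv k
end
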